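/- Let t be an involutory isometry of a nondegenerate quadratic space (V, q) over F₂ and let S ≤ V be a t-invariant nondegenerate subspace on which t acts nontrivially, minimal with these properties (an MNS-subspace). If there exists a singular vector v ∈ S with v ≠ v^t and (v, v^t) = 0, then dim S = 4 and S has a basis u₁, u₂, v₁, v₂ of singular vectors with v₁^t = v₂, u₁^t = u₂, (v_i, u_j) = δ_{ij}, (v₁,v₂) = (u₁,u₂) = 0. Otherwise dim S = 2 with a basis u, v = u^t satisfying (u,v) = 1 and q(u) = q(v). -/

import Mathlib

open QuadraticMap Submodule Set

private lemma zmod2_cases (a : ZMod 2) : a = 0 ∨ a = 1 := by revert a; decide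

private lemma zmod2_ne_zero {a : ZMod 2} (h : a ≠ 0) : a = 1 := by revert h; revert a; decide

private lemma polar_self_zero {V : Type*} [AddCommGroup V] [Module (ZMod 2) V]
    (Q : QuadraticForm (ZMod 2) V) (x : V) : polar (⇑Q) x x = 0 := by
  have hxx : x + x = 0 := by
    rw [← two_smul (ZMod 2) x, show (2 : ZMod 2) = 0 by decide, zero_smul]
  have h2 : Q x + Q x = 0 := by
    rw [← two_mul, show (2 : ZMod 2) = 0 by decide, zero_mul]
  simp [QuadraticMap.polar, hxx, sub_eq_add_neg]

private lemma mem_span_quad {V : Type*} [AddCommGroup V] [Module (ZMod 2) V]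
    {a b c d x : V} (h : x ∈ Submodule.span (ZMod 2) ({a, b, c, d} : Set V)) :
    ∃ p q r s : ZMod 2, x = p • a + q • b + r • c + s • d := by
  rw [Submodule.mem_span_insert] at h
  obtain ⟨p, z, hz, rfl⟩ := h
  rw [Submodule.mem_span_insert] at hz
  obtain ⟨q, z2, hz2, rfl⟩ := hz
  rw [Submodule.mem_span_pair] at hz2
  obtain ⟨r, s, rfl⟩ := hz2
  exact ⟨p, q, r, s, by module⟩

private lemma nondeg_pair {V : Type*} [AddCommGroup V] [Module (ZMod 2) V]
    (Q : QuadraticForm (ZMod 2) V) {a b : V}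
    (hab : polar (⇑Q) a b = 1) :
    ∀ x ∈ Submodule.span (ZMod 2) ({a, b} : Set V),
      (∀ y ∈ Submodule.span (ZMod 2) ({a, b} : Set V), polar (⇑Q) x y = 0) → x = 0 := by
  intro x hx hy
  obtain ⟨p, q, rfl⟩ := Submodule.mem_span_pair.mp hx
  have ha : a ∈ Submodule.span (ZMod 2) ({a, b} : Set V) :=
    Submodule.subset_span (by simp)
  have hb : b ∈ Submodule.span (ZMod 2) ({a, b} : Set V) :=
    Submodule.subset_span (by simp)
  have h1 := hy a ha
  have h2 := hy b hb
  rw [polar_add_left, polar_smul_left, polar_smul_left, polar_self_zero,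
    polar_comm _ b a, hab] at h1
  rw [polar_add_left, polar_smul_left, polar_smul_left, polar_self_zero, hab] at h2
  simp only [smul_eq_mul, mul_zero, mul_one, zero_add, add_zero] at h1 h2
  rw [h1, h2, zero_smul, zero_smul, add_zero]

private lemma nondeg_quad {V : Type*} [AddCommGroup V] [Module (ZMod 2) V]
    (Q : QuadraticForm (ZMod 2) V) {a b c d : V}
    (hac : polar (⇑Q) a c = 1) (hbd : polar (⇑Q) b d = 1)
    (hab : polar (⇑Q) a b = 0) (had : polar (⇑Q) a d = 0)
    (hbc : polar (⇑Q) b c = 0) (hcd : polar (⇑Q) c d = 0) :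
    ∀ x ∈ Submodule.span (ZMod 2) ({a, b, c, d} : Set V),
      (∀ y ∈ Submodule.span (ZMod 2) ({a, b, c, d} : Set V), polar (⇑Q) x y = 0) → x = 0 := by
  intro x hx hy
  obtain ⟨p, q, r, s, rfl⟩ := mem_span_quad hx
  have ha : a ∈ Submodule.span (ZMod 2) ({a, b, c, d} : Set V) := Submodule.subset_span (by simp)
  have hb : b ∈ Submodule.span (ZMod 2) ({a, b, c, d} : Set V) := Submodule.subset_span (by simp)
  have hc : c ∈ Submodule.span (ZMod 2) ({a, b, c, d} : Set V) := Submodule.subset_span (by simp)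
  have hd : d ∈ Submodule.span (ZMod 2) ({a, b, c, d} : Set V) := Submodule.subset_span (by simp)
  have h1 := hy c hc
  have h2 := hy d hd
  have h3 := hy a ha
  have h4 := hy b hb
  simp only [polar_add_left, polar_smul_left, polar_self_zero, smul_eq_mul,
    polar_comm _ c a, polar_comm _ d a, polar_comm _ c b, polar_comm _ d b,
    polar_comm _ b a, polar_comm _ d c, hac, hbd, hab, had, hbc, hcd,
    mul_zero, mul_one, zero_add, add_zero] at h1 h2 h3 h4
  rw [h1, h2, h3, h4]
  simp

private lemma linind_quad {V : Type*} [AddCommGroup V] [Module (ZMod 2) V]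
    (Q : QuadraticForm (ZMod 2) V) {a b c d : V}
    (hac : polar (⇑Q) a c = 1) (hbd : polar (⇑Q) b d = 1)
    (hab : polar (⇑Q) a b = 0) (had : polar (⇑Q) a d = 0)
    (hbc : polar (⇑Q) b c = 0) (hcd : polar (⇑Q) c d = 0) :
    LinearIndependent (ZMod 2) ![a, b, c, d] := by
  rw [Fintype.linearIndependent_iff]
  intro g hg
  rw [Fin.sum_univ_four] at hg
  simp only [Matrix.cons_val_zero, Matrix.cons_val_one, Matrix.head_cons,
    Matrix.cons_val_two, Matrix.tail_cons, Matrix.cons_val_three] at hg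
  have key : ∀ y : V, polar (⇑Q) (g 0 • a + g 1 • b + g 2 • c + g 3 • d) y = 0 := by
    intro y; rw [hg]
    simp [QuadraticMap.polar]
  have h1 := key c
  have h2 := key d
  have h3 := key a
  have h4 := key b
  simp only [polar_add_left, polar_smul_left, polar_self_zero, smul_eq_mul,
    polar_comm _ c a, polar_comm _ d a, polar_comm _ c b, polar_comm _ d b,
    polar_comm _ b a, polar_comm _ d c, hac, hbd, hab, had, hbc, hcd,
    mul_zero, mul_one, zero_add, add_zero] at h1 h2 h3 h4
  intro i
  fin_cases i <;> simp [h1, h2, h3, h4]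

private lemma range_four {V : Type*} (a b c d : V) :
    Set.range ![a, b, c, d] = ({a, b, c, d} : Set V) := by
  ext x
  simp [Matrix.range_cons, Matrix.range_empty]; tauto

private lemma range_two {V : Type*} (a b : V) :
    Set.range ![a, b] = ({a, b} : Set V) := by
  ext x
  simp [Matrix.range_cons, Matrix.range_empty]; tauto
private lemma linind_pair {V : Type*} [AddCommGroup V] [Module (ZMod 2) V]
    (Q : QuadraticForm (ZMod 2) V) {a b : V}
    (hab : polar (⇑Q) a b = 1) :
    LinearIndependent (ZMod 2) ![a, b] := by
  rw [LinearIndependent.pair_iff]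
  intro p q hpq
  have key : ∀ y : V, polar (⇑Q) (p • a + q • b) y = 0 := by
    intro y; rw [hpq]; simp [QuadraticMap.polar]
  have h1 := key b
  have h2 := key a
  simp only [polar_add_left, polar_smul_left, polar_self_zero, smul_eq_mul,
    polar_comm _ b a, hab, mul_zero, mul_one, zero_add, add_zero] at h1 h2
  exact ⟨h1, h2⟩

/-- Classification of MNS-subspaces (minimal nonsingular `t`-invariant
subspaces on which the involutory isometry `t` acts nontrivially) of a
quadratic space over `F₂`: they have dimension 2 or 4, with the indicated
standard bases. -/
theorem mns_subspace_classification
    {V : Type*} [AddCommGroup V] [Module (ZMod 2) V] [FiniteDimensional (ZMod 2) V]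
    (Q : QuadraticForm (ZMod 2) V)
    (hnd : ∀ x : V, (∀ y : V, QuadraticMap.polar Q x y = 0) → x = 0)
    (t : V →ₗ[ZMod 2] V)
    (ht2 : t ∘ₗ t = LinearMap.id)
    (hiso : ∀ x, Q (t x) = Q x)
    (Nondeg : Submodule (ZMod 2) V → Prop)
    (hNondeg : ∀ T, Nondeg T ↔ ∀ x ∈ T, (∀ y ∈ T, QuadraticMap.polar Q x y = 0) → x = 0)
    (S : Submodule (ZMod 2) V)
    (hS0 : S ≠ ⊥) (hSnd : Nondeg S) (hSt : S.map t ≤ S)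
    (hnontriv : ∃ v ∈ S, t v ≠ v)
    (hmin : ∀ T : Submodule (ZMod 2) V,
        T ≤ S → T ≠ ⊥ → Nondeg T → T.map t ≤ T → T = S) :
    ((∃ v ∈ S, Q v = 0 ∧ t v ≠ v ∧ QuadraticMap.polar Q v (t v) = 0) →
      Module.finrank (ZMod 2) S = 4 ∧
      ∃ u₁ ∈ S, ∃ v₁ ∈ S,
        Q u₁ = 0 ∧ Q v₁ = 0 ∧ Q (t u₁) = 0 ∧ Q (t v₁) = 0 ∧
        QuadraticMap.polar Q v₁ u₁ = 1 ∧
        QuadraticMap.polar Q (t v₁) (t u₁) = 1 ∧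
        QuadraticMap.polar Q v₁ (t u₁) = 0 ∧
        QuadraticMap.polar Q (t v₁) u₁ = 0 ∧
        QuadraticMap.polar Q v₁ (t v₁) = 0 ∧
        QuadraticMap.polar Q u₁ (t u₁) = 0 ∧
        t v₁ ≠ v₁ ∧ t u₁ ≠ u₁ ∧
        S = Submodule.span (ZMod 2) {u₁, t u₁, v₁, t v₁}) ∧
    ((¬ ∃ v ∈ S, Q v = 0 ∧ t v ≠ v ∧ QuadraticMap.polar Q v (t v) = 0) →
      Module.finrank (ZMod 2) S = 2 ∧
      ∃ u ∈ S, t u ≠ u ∧ QuadraticMap.polar Q u (t u) = 1 ∧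
        Q (t u) = Q u ∧ S = Submodule.span (ZMod 2) {u, t u}) := by
  -- basic facts
  have htt : ∀ x, t (t x) = x := by
    intro x
    have := LinearMap.ext_iff.mp ht2 x
    simpa using this
  have haa : ∀ x : V, x + x = 0 := by
    intro x
    rw [← two_smul (ZMod 2) x, show (2 : ZMod 2) = 0 by decide, zero_smul]
  have hPt : ∀ x y, polar (⇑Q) (t x) (t y) = polar (⇑Q) x y := by
    intro x y
    simp only [QuadraticMap.polar, ← map_add, hiso]
  have htmemS : ∀ x ∈ S, t x ∈ S := fun x hx => hSt ⟨x, hx, rfl⟩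
  have hSnd' := (hNondeg S).mp hSnd
  have getpart : ∀ w ∈ S, w ≠ 0 → ∃ u ∈ S, polar (⇑Q) u w = 1 := by
    intro w hw hw0
    by_contra h
    push_neg at h
    refine hw0 (hSnd' w hw fun y hy => ?_)
    rcases zmod2_cases (polar (⇑Q) w y) with h0 | h1
    · exact h0
    · exact absurd (by rw [polar_comm]; exact h1) (h y hy)
  have adjust : ∀ v, v ∈ S → t v ≠ v →
      ∃ u ∈ S, polar (⇑Q) u v = 1 ∧ polar (⇑Q) u (t v) = 0 := by
    intro v hvS hvt
    have hwS : v + t v ∈ S := S.add_mem hvS (htmemS v hvS)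
    have hw0 : v + t v ≠ 0 := by
      intro h
      apply hvt
      have h2 : v + (v + t v) = v + 0 := by rw [h]
      rw [← add_assoc, haa, zero_add, add_zero] at h2
      exact h2
    obtain ⟨u, huS, hu⟩ := getpart (v + t v) hwS hw0
    rw [polar_add_right] at hu
    rcases zmod2_cases (polar (⇑Q) u v) with h0 | h1
    · refine ⟨t u, htmemS u huS, ?_, ?_⟩
      · have h' : polar (⇑Q) (t u) v = polar (⇑Q) u (t v) := by
          conv_lhs => rw [← htt v]
          rw [hPt]
        rw [h']
        rw [h0, zero_add] at hu
        exact hu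
      · rw [hPt, h0]
    · refine ⟨u, huS, h1, ?_⟩
      rw [h1] at hu
      rcases zmod2_cases (polar (⇑Q) u (t v)) with h0 | h1'
      · exact h0
      · rw [h1'] at hu; exact absurd hu (by decide)
  have twodim : ∀ u, u ∈ S → polar (⇑Q) u (t u) = 1 →
      S = Submodule.span (ZMod 2) {u, t u} := by
    intro u huS hc
    have hu0 : u ≠ 0 := by
      intro h
      rw [h, map_zero, polar_zero_left] at hc
      exact absurd hc (by decide)
    refine (hmin _ ?_ ?_ ?_ ?_).symm
    · rw [Submodule.span_le]
      rintro x (rfl | rfl)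
      · exact huS
      · exact htmemS u huS
    · rw [Submodule.ne_bot_iff]
      exact ⟨u, Submodule.subset_span (by simp), hu0⟩
    · exact (hNondeg _).mpr (nondeg_pair Q hc)
    · rw [Submodule.map_span, Set.image_insert_eq, Set.image_singleton, htt]
      rw [Submodule.span_le]
      rintro x (rfl | rfl) <;> exact Submodule.subset_span (by simp)
  -- the contradiction pattern when polar u (t u) = 1
  have c1F : ∀ v u : V, t v ≠ v → polar (⇑Q) v (t v) = 0 → v ∈ S →
      polar (⇑Q) u v = 1 → polar (⇑Q) u (t v) = 0 → u ∈ S →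
      polar (⇑Q) u (t u) = 1 → False := by
    intro v u hvt hP0 hvS hu1 hu2 huS hc
    have hT := twodim u huS hc
    have hv : v ∈ Submodule.span (ZMod 2) ({u, t u} : Set V) := hT ▸ hvS
    obtain ⟨p, q, hpq⟩ := Submodule.mem_span_pair.mp hv
    rcases zmod2_cases p with rfl | rfl <;> rcases zmod2_cases q with rfl | rfl <;>
      simp only [zero_smul, one_smul, zero_add, add_zero] at hpq
    · exact hvt (by rw [← hpq, map_zero])
    · -- v = t u
      rw [← hpq] at hP0
      rw [htt, polar_comm] at hP0
      rw [hP0] at hc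
      exact absurd hc (by decide)
    · -- v = u
      rw [← hpq] at hP0
      rw [hP0] at hc
      exact absurd hc (by decide)
    · -- v = u + t u
      apply hvt
      rw [← hpq, map_add, htt, add_comm]
  constructor
  · -- Case A : dimension 4
    rintro ⟨v, hvS, hQv, hvt, hP0⟩
    have hv0 : v ≠ 0 := fun h => hvt (by rw [h, map_zero])
    obtain ⟨u, huS, hu1, hu2⟩ := adjust v hvS hvt
    rcases zmod2_cases (polar (⇑Q) u (t u)) with hc0 | hc1
    swap
    · exact (c1F v u hvt hP0 hvS hu1 hu2 huS hc1).elim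
    have hvtu : polar (⇑Q) v (t u) = 0 := by
      calc polar (⇑Q) v (t u) = polar (⇑Q) (t (t v)) (t u) := by rw [htt]
        _ = polar (⇑Q) (t v) u := hPt _ _
        _ = polar (⇑Q) u (t v) := polar_comm _ _ _
        _ = 0 := hu2
    obtain ⟨u₁, hu₁S, hQu₁, hac, had, hab⟩ :
        ∃ u₁ ∈ S, Q u₁ = 0 ∧ polar (⇑Q) u₁ v = 1 ∧ polar (⇑Q) u₁ (t v) = 0 ∧
          polar (⇑Q) u₁ (t u₁) = 0 := by
      rcases zmod2_cases (Q u) with hQu | hQu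
      · exact ⟨u, huS, hQu, hu1, hu2, hc0⟩
      · refine ⟨u + v, S.add_mem huS hvS, ?_, ?_, ?_, ?_⟩
        · rw [QuadraticMap.map_add (⇑Q) u v, hQu, hQv, hu1]; decide
        · rw [polar_add_left, hu1, polar_self_zero, add_zero]
        · rw [polar_add_left, hu2, hP0, add_zero]
        · rw [_root_.map_add, polar_add_right, polar_add_left, polar_add_left,
            hc0, hu2, hvtu, hP0]
          decide
    have hbd : polar (⇑Q) (t u₁) (t v) = 1 := by rw [hPt]; exact hac
    have hbc : polar (⇑Q) (t u₁) v = 0 := by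
      calc polar (⇑Q) (t u₁) v = polar (⇑Q) (t u₁) (t (t v)) := by rw [htt]
        _ = polar (⇑Q) u₁ (t v) := hPt _ _
        _ = 0 := had
    have hu₁t : t u₁ ≠ u₁ := by
      intro h
      rw [h] at hbc
      exact absurd (hbc.symm.trans hac) (by decide)
    have hT : Submodule.span (ZMod 2) ({u₁, t u₁, v, t v} : Set V) = S := by
      refine hmin _ ?_ ?_ ?_ ?_
      · rw [Submodule.span_le]
        rintro x (rfl | rfl | rfl | rfl)
        · exact hu₁S
        · exact htmemS u₁ hu₁S
        · exact hvS
        · exact htmemS v hvS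
      · rw [Submodule.ne_bot_iff]
        exact ⟨v, Submodule.subset_span (by simp), hv0⟩
      · exact (hNondeg _).mpr (nondeg_quad Q hac hbd hab had hbc hP0)
      · rw [Submodule.map_span, Set.image_insert_eq, Set.image_insert_eq, Set.image_insert_eq,
          Set.image_singleton, htt, htt, Submodule.span_le]
        rintro x (rfl | rfl | rfl | rfl) <;> exact Submodule.subset_span (by simp)
    refine ⟨?_, u₁, hu₁S, v, hvS, hQu₁, hQv, ?_, ?_, ?_, ?_, ?_, ?_, hP0, hab, hvt, hu₁t,
      hT.symm⟩
    · rw [← hT, ← range_four]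
      simpa using finrank_span_eq_card (linind_quad Q hac hbd hab had hbc hP0)
    · rw [hiso]; exact hQu₁
    · rw [hiso]; exact hQv
    · rw [polar_comm]; exact hac
    · rw [polar_comm]; exact hbd
    · rw [polar_comm]; exact hbc
    · rw [polar_comm]; exact had
  · -- Case B : dimension 2
    intro hno
    obtain ⟨v, hvS, hvt⟩ := hnontriv
    have hv0 : v ≠ 0 := fun h => hvt (by rw [h, map_zero])
    have hP1 : polar (⇑Q) v (t v) = 1 := by
      rcases zmod2_cases (polar (⇑Q) v (t v)) with hP0 | h1
      swap
      · exact h1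
      exfalso
      have hQv : Q v = 1 := by
        rcases zmod2_cases (Q v) with h0 | h1
        · exact absurd ⟨v, hvS, h0, hvt, hP0⟩ hno
        · exact h1
      obtain ⟨u, huS, hu1, hu2⟩ := adjust v hvS hvt
      have hvtu : polar (⇑Q) v (t u) = 0 := by
        calc polar (⇑Q) v (t u) = polar (⇑Q) (t (t v)) (t u) := by rw [htt]
          _ = polar (⇑Q) (t v) u := hPt _ _
          _ = polar (⇑Q) u (t v) := polar_comm _ _ _
          _ = 0 := hu2
      have hut : t u ≠ u := by
        intro h
        have h' : polar (⇑Q) (t u) (t v) = 1 := by rw [hPt]; exact hu1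
        rw [h] at h'
        exact absurd (hu2.symm.trans h') (by decide)
      rcases zmod2_cases (polar (⇑Q) u (t u)) with hc0 | hc1
      swap
      · exact c1F v u hvt hP0 hvS hu1 hu2 huS hc1
      rcases zmod2_cases (Q u) with hQu0 | hQu1
      · exact hno ⟨u, huS, hQu0, hut, hc0⟩
      have hQtv : Q (t v) = 1 := by rw [hiso]; exact hQv
      have hQz : Q (u + t v) = 0 := by
        rw [QuadraticMap.map_add (⇑Q) u (t v), hQu1, hQtv, hu2]; decide
      have htz : t (u + t v) = t u + v := by rw [_root_.map_add, htt]
      rcases eq_or_ne (t (u + t v)) (u + t v) with hfix | hnfix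
      swap
      · have h1' : polar (⇑Q) (t v) (t u) = 1 := by
          rw [hPt, polar_comm]; exact hu1
        have h2' : polar (⇑Q) (t v) v = 0 := by rw [polar_comm]; exact hP0
        have hpz : polar (⇑Q) (u + t v) (t (u + t v)) = 0 := by
          rw [htz, polar_add_left, polar_add_right, polar_add_right, hc0, hu1, h1', h2']
          decide
        exact hno ⟨u + t v, S.add_mem huS (htmemS v hvS), hQz, hnfix, hpz⟩
      · rw [htz] at hfix
        have htu : t u = u + t v + v := by
          have h' : t u + v + v = u + t v + v := by rw [hfix]
          rwa [add_assoc, haa, add_zero] at h'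
        have hz'S : u + v + t v ∈ S := S.add_mem (S.add_mem huS hvS) (htmemS v hvS)
        have htz' : t (u + v + t v) = u := by
          rw [_root_.map_add, _root_.map_add, htt, htu]
          rw [show u + t v + v + t v + v = u + (t v + t v) + (v + v) from by abel, haa, haa,
            add_zero, add_zero]
        have hz'u : polar (⇑Q) (u + v + t v) (t (u + v + t v)) = 1 := by
          rw [htz', polar_add_left, polar_add_left, polar_self_zero, polar_comm _ v u, hu1,
            polar_comm _ (t v) u, hu2]
          decide
        have hT := twodim _ hz'S hz'u
        have hvmem : v ∈ Submodule.span (ZMod 2)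
            ({u + v + t v, t (u + v + t v)} : Set V) := hT ▸ hvS
        obtain ⟨p, q, hpq⟩ := Submodule.mem_span_pair.mp hvmem
        rw [htz'] at hpq
        rcases zmod2_cases p with rfl | rfl <;> rcases zmod2_cases q with rfl | rfl <;>
          simp only [zero_smul, one_smul, zero_add, add_zero] at hpq
        · exact hv0 hpq.symm
        · -- v = u
          rw [← hpq] at hu1
          rw [polar_self_zero] at hu1
          exact absurd hu1 (by decide)
        · -- u + v + t v = v, hence u = t v
          have h2 : u + v + t v + (v + t v) = v + (v + t v) := by rw [hpq]
          rw [show u + v + t v + (v + t v) = u + (v + v) + (t v + t v) from by abel,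
            show v + (v + t v) = v + v + t v from by rw [add_assoc],
            haa, haa, add_zero, add_zero, zero_add] at h2
          rw [h2, polar_comm] at hu1
          exact absurd (hP0.symm.trans hu1) (by decide)
        · -- (u + v + t v) + u = v, hence v + t v = v
          rw [show u + v + t v + u = u + u + (v + t v) from by abel, haa, zero_add] at hpq
          have h2 : v + (v + t v) = v + v := by rw [hpq]
          rw [← add_assoc, haa, zero_add] at h2
          apply hv0
          rw [← htt v, h2, map_zero]
    have hT := twodim v hvS hP1
    refine ⟨?_, v, hvS, hvt, hP1, hiso v, hT⟩
    rw [hT, ← range_two]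
    simpa using finrank_span_eq_card (linind_pair Q hP1)
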